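/- arXiv:2312.13379 — 2 statements merged into one kernel-verified Lean document; each statement's English description precedes it below -/
import Mathlib

section
/- Let d ∈ ℕ, M > 0, y ∈ ℝ^d, and let x ∈ ℝ^d satisfy |x_j − y_j| ≤ 1/(2dM) for all j. Then λ²_{M,y_j}(x_j) ≥ 1 − 4/(3√3 d) for each j, Δ_{M,y}(x) ≥ 1 − 4/(3√3), and ϑ_{M,y}(x) ≥ (2/81)(9 − 4√3)². -/
noncomputable def requ (x : ℝ) : ℝ := max 0 x ^ 2

noncomputable def theta (x : ℝ) : ℝ := 2 * (requ x - 2 * requ (x - 1/2) + requ (x - 1))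

noncomputable def bump (M y x : ℝ) : ℝ :=
  if |x - y| ≤ 1 / M then (1 - M ^ 2 * (x - y) ^ 2) ^ 2 else 0

lemma theta_lb (c t : ℝ) (hc0 : 0 ≤ c) (hc : c ≤ 1/2) (hct : c ≤ t) :
    2 * c ^ 2 ≤ theta t := by
  unfold theta requ
  rcases le_or_gt t (1/2) with h1 | h1
  · rw [max_eq_right (by linarith), max_eq_left (by linarith),
      max_eq_left (by linarith)]
    nlinarith
  · rcases le_or_gt t 1 with h2 | h2
    · rw [max_eq_right (by linarith), max_eq_right (by linarith),
        max_eq_left (by linarith)]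
      nlinarith [mul_nonneg (by linarith : (0:ℝ) ≤ t - 1/2) (by linarith : (0:ℝ) ≤ 1 - t)]
    · rw [max_eq_right (by linarith), max_eq_right (by linarith),
        max_eq_right (by linarith)]
      nlinarith

theorem stmt7 (d : ℕ) (hd : 0 < d) (M : ℝ) (hM : 0 < M) (y x : Fin d → ℝ)
    (hx : ∀ j, |x j - y j| ≤ 1 / (2 * d * M)) :
    (∀ j, 1 - 4 / (3 * Real.sqrt 3 * d) ≤ bump M (y j) (x j)) ∧
    (1 - 4 / (3 * Real.sqrt 3) ≤ (∑ j, bump M (y j) (x j)) - ((d : ℝ) - 1)) ∧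
    ((2/81) * (9 - 4 * Real.sqrt 3)^2
      ≤ theta ((∑ j, bump M (y j) (x j)) - ((d : ℝ) - 1))) := by
  set s := Real.sqrt 3 with hs
  have hs2 : s ^ 2 = 3 := Real.sq_sqrt (by norm_num)
  have hs1 : (1.7 : ℝ) ≤ s := by nlinarith [Real.sqrt_nonneg 3]
  have hsu : s ≤ 1.8 := by nlinarith [Real.sqrt_nonneg 3]
  have hdR : (1 : ℝ) ≤ (d : ℝ) := by exact_mod_cast hd
  have hdpos : (0 : ℝ) < (d : ℝ) := by linarith
  -- rewrite the per-coordinate bound constant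
  have hconst : 4 / (3 * s * d) = 4 * s / (9 * d) := by
    rw [div_eq_div_iff (by positivity) (by positivity)]
    nlinarith
  have h1 : ∀ j, 1 - 4 / (3 * s * d) ≤ bump M (y j) (x j) := by
    intro j
    have hxj := hx j
    have hsmall : 1 / (2 * d * M) ≤ 1 / M := by
      apply div_le_div_of_nonneg_left (by norm_num) hM
      nlinarith
    have hin : |x j - y j| ≤ 1 / M := le_trans hxj hsmall
    rw [bump, if_pos hin, hconst]
    set u := M ^ 2 * (x j - y j) ^ 2 with hudef
    have hu0 : 0 ≤ u := by positivity
    have ht : |x j - y j| * (2 * d * M) ≤ 1 := by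
      rw [← le_div_iff₀ (by positivity)]; exact hxj
    have ht2 : u * (4 * (d:ℝ) ^ 2) ≤ 1 := by
      have h : (|x j - y j| * (2 * d * M)) ^ 2 ≤ 1 ^ 2 :=
        pow_le_pow_left₀ (by positivity) ht 2
      rw [mul_pow, sq_abs] at h
      rw [hudef]
      nlinarith [h]
    rw [sub_le_comm, le_div_iff₀ (by positivity)]
    nlinarith [mul_nonneg (mul_nonneg hu0 hdpos.le) (by linarith : (0:ℝ) ≤ (d:ℝ) - 1),
      mul_nonneg (sq_nonneg u) hdpos.le]
  refine ⟨h1, ?_, ?_⟩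
  · have hsum : (d : ℝ) * (1 - 4 / (3 * s * d)) ≤ ∑ j, bump M (y j) (x j) := by
      calc (d : ℝ) * (1 - 4 / (3 * s * d)) = ∑ _j : Fin d, (1 - 4 / (3 * s * d)) := by
            rw [Finset.sum_const, Finset.card_univ, Fintype.card_fin, nsmul_eq_mul]
        _ ≤ ∑ j, bump M (y j) (x j) := Finset.sum_le_sum fun j _ => h1 j
    have hexp : (d : ℝ) * (1 - 4 / (3 * s * d)) = (d : ℝ) - 4 / (3 * s) := by
      field_simp
    rw [hexp] at hsum
    linarith
  · have hsum : 1 - 4 / (3 * s) ≤ (∑ j, bump M (y j) (x j)) - ((d : ℝ) - 1) := by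
      have hsum : (d : ℝ) * (1 - 4 / (3 * s * d)) ≤ ∑ j, bump M (y j) (x j) := by
        calc (d : ℝ) * (1 - 4 / (3 * s * d)) = ∑ _j : Fin d, (1 - 4 / (3 * s * d)) := by
              rw [Finset.sum_const, Finset.card_univ, Fintype.card_fin, nsmul_eq_mul]
          _ ≤ ∑ j, bump M (y j) (x j) := Finset.sum_le_sum fun j _ => h1 j
      have hexp : (d : ℝ) * (1 - 4 / (3 * s * d)) = (d : ℝ) - 4 / (3 * s) := by
        field_simp
      rw [hexp] at hsum
      linarith
    have hc : 1 - 4 / (3 * s) = (9 - 4 * s) / 9 := by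
      have h4 : 4 / (3 * s) = 4 * s / 9 := by
        rw [div_eq_div_iff (by positivity) (by norm_num : (9:ℝ) ≠ 0)]
        linear_combination (-12) * hs2
      rw [h4]; ring
    have key := theta_lb ((9 - 4 * s) / 9) ((∑ j, bump M (y j) (x j)) - ((d : ℝ) - 1))
      (by nlinarith) (by nlinarith) (by rw [hc] at hsum; exact hsum)
    have : 2 * ((9 - 4 * s) / 9) ^ 2 = (2/81) * (9 - 4 * s) ^ 2 := by ring
    linarith
end

section
/- Let F be the realization of a ReQU neural network with input dimension d, output dimension 1, at most n nonzero weights, at most L layers, and all weights and biases of magnitude at most C ≥ 1. Then F restricted to [0,1]^d is Lipschitz with respect to the ℓ¹ norm with Lipschitz constant at most 2^{2^L+L−3}·d^{(2^{L−1}−1)/2}·C^{2^L−1}·n^{(2^L−1)/2}, and Lipschitz with respect to the ℓ^∞ norm with constant at most d times that bound. -/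
/-- The hiddenLayers-layer outputs ρ₂∘T_k ∘ ⋯ ∘ ρ₂∘T_1 of a ReQU network. -/
noncomputable def hiddenLayers (Nd : ℕ → ℕ)
    (A : (ℓ : ℕ) → Matrix (Fin (Nd (ℓ + 1))) (Fin (Nd ℓ)) ℝ)
    (b : (ℓ : ℕ) → Fin (Nd (ℓ + 1)) → ℝ) :
    (k : ℕ) → (Fin (Nd 0) → ℝ) → Fin (Nd k) → ℝ
  | 0, x => x
  | (k + 1), x => fun i => requ ((A k).mulVec (hiddenLayers Nd A b k x) i + b k i)

/-- The realization T_{L'+1} ∘ (ρ₂∘T_{L'}) ∘ ⋯ ∘ (ρ₂∘T_1) of a ReQU network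
with L'+1 layers. -/
noncomputable def realize (Nd : ℕ → ℕ)
    (A : (ℓ : ℕ) → Matrix (Fin (Nd (ℓ + 1))) (Fin (Nd ℓ)) ℝ)
    (b : (ℓ : ℕ) → Fin (Nd (ℓ + 1)) → ℝ)
    (L' : ℕ) (x : Fin (Nd 0) → ℝ) : Fin (Nd (L' + 1)) → ℝ :=
  fun i => (A L').mulVec (hiddenLayers Nd A b L' x) i + b L' i

lemma omul {a c : ℝ} (ha : 1 ≤ a) (hc : 1 ≤ c) : 1 ≤ a * c := by nlinarith

lemma abs_requ_sub_le (a c : ℝ) : |requ a - requ c| ≤ (max 0 a + max 0 c) * |a - c| := by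
  unfold requ
  have h1 : max 0 a ^ 2 - max 0 c ^ 2 = (max 0 a - max 0 c) * (max 0 a + max 0 c) := by ring
  rw [h1, abs_mul]
  have h2 : |max 0 a - max 0 c| ≤ |a - c| := by
    have := abs_max_sub_max_le_abs a c 0
    simpa [max_comm] using this
  have h3 : |max 0 a + max 0 c| = max 0 a + max 0 c := abs_of_nonneg (by positivity)
  rw [h3, mul_comm]
  exact mul_le_mul_of_nonneg_left h2 (by positivity)

/-- bound on sum of squares of hidden layer k -/
noncomputable def Sb (C : ℝ) (n d : ℕ) : ℕ → ℝ
  | 0 => d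
  | (k+1) => (2 * C^2 * n * Sb C n d k)^2

/-- Lipschitz bound (squared) -/
noncomputable def Tb (C : ℝ) (n d : ℕ) : ℕ → ℝ
  | 0 => 1
  | (k+1) => 8 * C^4 * n^2 * Sb C n d k * Tb C n d k

lemma one_le_Sb {C : ℝ} {n d : ℕ} (hC : 1 ≤ C) (hn : 1 ≤ n) (hd : 1 ≤ d) :
    ∀ k, 1 ≤ Sb C n d k
  | 0 => by simpa [Sb] using (Nat.one_le_cast.2 hd : (1:ℝ) ≤ d)
  | (k+1) => by
      have ih := one_le_Sb hC hn hd k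
      have hn' : (1:ℝ) ≤ n := Nat.one_le_cast.2 hn
      simp only [Sb]
      have hC2 : (1:ℝ) ≤ C^2 := one_le_pow₀ hC
      have h1 : (1:ℝ) ≤ 2 * C^2 * ↑n * Sb C n d k :=
        omul (omul (omul (by norm_num) hC2) hn') ih
      nlinarith

lemma one_le_Tb {C : ℝ} {n d : ℕ} (hC : 1 ≤ C) (hn : 1 ≤ n) (hd : 1 ≤ d) :
    ∀ k, 1 ≤ Tb C n d k
  | 0 => le_refl _
  | (k+1) => by
      have ih := one_le_Tb hC hn hd k
      have hS := one_le_Sb hC hn hd k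
      have hn' : (1:ℝ) ≤ n := Nat.one_le_cast.2 hn
      simp only [Tb]
      have hC4 : (1:ℝ) ≤ C^4 := one_le_pow₀ hC
      have hn2 : (1:ℝ) ≤ (n:ℝ)^2 := by nlinarith
      exact omul (omul (omul (omul (by norm_num) hC4) hn2) hS) ih

lemma Sb_le {C : ℝ} {n d : ℕ} (hC : 1 ≤ C) (hn : 1 ≤ n) (hd : 1 ≤ d) :
    ∀ k, Sb C n d k ≤ (2*C^2*(n:ℝ))^(2*2^k-2) * (d:ℝ)^(2^k)
  | 0 => by simp [Sb]
  | (k+1) => by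
      have ih := Sb_le hC hn hd k
      have h0 : (0:ℝ) ≤ Sb C n d k := le_trans zero_le_one (one_le_Sb hC hn hd k)
      have hb : (1:ℝ) ≤ 2*C^2*(n:ℝ) := by
        have hn' : (1:ℝ) ≤ n := Nat.one_le_cast.2 hn
        nlinarith
      have hb0 : (0:ℝ) ≤ 2*C^2*(n:ℝ) := le_trans zero_le_one hb
      have hd0 : (0:ℝ) ≤ (d:ℝ) := Nat.cast_nonneg d
      have e1 : 2*2^(k+1)-2 = 2 + ((2*2^k-2) + (2*2^k-2)) := by
        have : 1 ≤ 2^k := Nat.one_le_two_pow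
        omega
      have e2 : 2^(k+1) = 2^k + 2^k := by omega
      simp only [Sb]
      calc (2 * C^2 * (n:ℝ) * Sb C n d k)^2
          ≤ (2 * C^2 * (n:ℝ) * ((2*C^2*(n:ℝ))^(2*2^k-2) * (d:ℝ)^(2^k)))^2 := by
            apply pow_le_pow_left₀ (by positivity)
            exact mul_le_mul_of_nonneg_left ih (by positivity)
        _ = (2*C^2*(n:ℝ))^(2 + ((2*2^k-2) + (2*2^k-2))) * (d:ℝ)^(2^k + 2^k) := by
            rw [pow_add, pow_add, pow_add]; ring
        _ = _ := by rw [e1, e2]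

lemma Tb_le {C : ℝ} {n d : ℕ} (hC : 1 ≤ C) (hn : 1 ≤ n) (hd : 1 ≤ d) :
    ∀ k, Tb C n d k ≤ 2^k * (2*C^2*(n:ℝ))^(2*2^k-2) * (d:ℝ)^(2^k-1)
  | 0 => by simp [Tb]
  | (k+1) => by
      have ihT := Tb_le hC hn hd k
      have ihS := Sb_le hC hn hd k
      have hT0 : (0:ℝ) ≤ Tb C n d k := le_trans zero_le_one (one_le_Tb hC hn hd k)
      have hS0 : (0:ℝ) ≤ Sb C n d k := le_trans zero_le_one (one_le_Sb hC hn hd k)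
      have hn' : (1:ℝ) ≤ n := Nat.one_le_cast.2 hn
      have hb : (1:ℝ) ≤ 2*C^2*(n:ℝ) := by nlinarith
      have hb0 : (0:ℝ) ≤ 2*C^2*(n:ℝ) := le_trans zero_le_one hb
      have hd0 : (0:ℝ) ≤ (d:ℝ) := Nat.cast_nonneg d
      have hp : 1 ≤ 2^k := Nat.one_le_two_pow
      have e1 : 2*2^(k+1)-2 = 2 + ((2*2^k-2) + (2*2^k-2)) := by omega
      have e2 : 2^(k+1)-1 = 2^k + (2^k-1) := by omega
      simp only [Tb]
      calc 8 * C^4 * (n:ℝ)^2 * Sb C n d k * Tb C n d k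
          ≤ 8 * C^4 * (n:ℝ)^2 * ((2*C^2*(n:ℝ))^(2*2^k-2) * (d:ℝ)^(2^k)) *
              (2^k * (2*C^2*(n:ℝ))^(2*2^k-2) * (d:ℝ)^(2^k-1)) := by
            apply mul_le_mul
            · exact mul_le_mul_of_nonneg_left ihS (by positivity)
            · exact ihT
            · exact hT0
            · positivity
        _ = 2^(k+1) * ((2*C^2*(n:ℝ))^(2 + ((2*2^k-2) + (2*2^k-2)))) * (d:ℝ)^(2^k + (2^k-1)) := by
            rw [pow_add, pow_add, pow_add, pow_succ]; ring
        _ = _ := by rw [e1, e2]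

lemma requ_eq (a : ℝ) : requ a = max 0 a ^ 2 := rfl

lemma sq_max_le (z : ℝ) : max 0 z ^ 2 ≤ z ^ 2 := by
  rcases le_total z 0 with h|h
  · rw [max_eq_left h]; simpa using sq_nonneg z
  · rw [max_eq_right h]

open Classical in
lemma card_prod_filter {m k : ℕ} (M : Matrix (Fin m) (Fin k) ℝ) :
    ((Finset.univ.filter (fun p : Fin m × Fin k => M p.1 p.2 ≠ 0)).card : ℝ) =
      ∑ i, ((Finset.univ.filter (fun j : Fin k => M i j ≠ 0)).card : ℝ) := by
  rw [Finset.card_filter, Fintype.sum_prod_type]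
  push_cast
  exact Finset.sum_congr rfl fun i _ => by rw [Finset.card_filter]; push_cast; rfl

open Classical in
lemma mulVec_sq_sum_le {m k : ℕ} (M : Matrix (Fin m) (Fin k) ℝ) (C : ℝ)
    (hM : ∀ i j, |M i j| ≤ C) (v : Fin k → ℝ) :
    ∑ i, (M.mulVec v i) ^ 2 ≤
      C ^ 2 * ((Finset.univ.filter (fun p : Fin m × Fin k => M p.1 p.2 ≠ 0)).card : ℝ)
        * ∑ j, v j ^ 2 := by
  have hv : 0 ≤ ∑ j, v j ^ 2 := Finset.sum_nonneg fun j _ => sq_nonneg _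
  calc ∑ i, (M.mulVec v i) ^ 2
      ≤ ∑ i, (C ^ 2 * ((Finset.univ.filter (fun j : Fin k => M i j ≠ 0)).card : ℝ) * ∑ j, v j ^ 2) := by
        refine Finset.sum_le_sum fun i _ => ?_
        have h1 : M.mulVec v i = ∑ j ∈ Finset.univ.filter (fun j : Fin k => M i j ≠ 0), M i j * v j := by
          rw [Matrix.mulVec, dotProduct]
          rw [Finset.sum_filter_of_ne]
          intro j _ h hMij
          simp [hMij] at h
        rw [h1]
        calc (∑ j ∈ Finset.univ.filter (fun j : Fin k => M i j ≠ 0), M i j * v j) ^ 2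
            ≤ (∑ j ∈ Finset.univ.filter (fun j : Fin k => M i j ≠ 0), (M i j)^2) *
              (∑ j ∈ Finset.univ.filter (fun j : Fin k => M i j ≠ 0), (v j)^2) :=
              Finset.sum_mul_sq_le_sq_mul_sq _ _ _
          _ ≤ (C ^ 2 * ((Finset.univ.filter (fun j : Fin k => M i j ≠ 0)).card : ℝ)) * ∑ j, v j ^ 2 := by
              apply mul_le_mul
              · calc ∑ j ∈ Finset.univ.filter (fun j : Fin k => M i j ≠ 0), (M i j)^2
                    ≤ ∑ _j ∈ Finset.univ.filter (fun j : Fin k => M i j ≠ 0), C^2 := by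
                      refine Finset.sum_le_sum fun j _ => ?_
                      have := hM i j
                      nlinarith [abs_nonneg (M i j), sq_abs (M i j)]
                  _ = C ^ 2 * _ := by rw [Finset.sum_const, nsmul_eq_mul, mul_comm]
              · exact Finset.sum_le_sum_of_subset_of_nonneg (Finset.filter_subset _ _)
                  (fun j _ _ => sq_nonneg _)
              · exact Finset.sum_nonneg fun j _ => sq_nonneg _
              · positivity
          _ = _ := by ring
    _ = _ := by
        rw [← Finset.sum_mul, ← Finset.mul_sum, card_prod_filter]

lemma final_numeric {C : ℝ} {n d L L' : ℕ} (hC : 1 ≤ C) (hn : 1 ≤ n) (hd : 1 ≤ d)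
    (hL : L' + 1 ≤ L) :
    C^2 * (n:ℝ) * Tb C n d L' ≤
      (2 ^ (2 ^ L + L - 3) * (d : ℝ) ^ (((2 : ℝ) ^ (L - 1) - 1) / 2) *
        C ^ (2 ^ L - 1) * (n : ℝ) ^ (((2 : ℝ) ^ L - 1) / 2))^2 := by
  have hd0 : (0:ℝ) ≤ (d:ℝ) := Nat.cast_nonneg d
  have hn0 : (0:ℝ) ≤ (n:ℝ) := Nat.cast_nonneg n
  have hd1 : (1:ℝ) ≤ (d:ℝ) := Nat.one_le_cast.2 hd
  have hn1 : (1:ℝ) ≤ (n:ℝ) := Nat.one_le_cast.2 hn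
  have hL1 : 1 ≤ L := le_trans (Nat.le_add_left 1 L') hL
  -- convert rpow squares to natural powers
  have h2c : ((2:ℕ):ℝ) = 2 := by norm_num
  have hdr : ((d:ℝ) ^ (((2:ℝ)^(L-1)-1)/2))^(2:ℕ) = (d:ℝ)^((2^(L-1)-1 : ℕ)) := by
    rw [← Real.rpow_natCast ((d:ℝ) ^ (((2:ℝ)^(L-1)-1)/2)) 2, ← Real.rpow_mul hd0, h2c,
      div_mul_cancel₀ _ (by norm_num : (2:ℝ) ≠ 0),
      show (2:ℝ)^(L-1)-1 = ((2^(L-1)-1 : ℕ):ℝ) by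
        push_cast [Nat.one_le_two_pow]; ring,
      Real.rpow_natCast]
  have hnr : ((n:ℝ) ^ (((2:ℝ)^L-1)/2))^(2:ℕ) = (n:ℝ)^((2^L-1 : ℕ)) := by
    rw [← Real.rpow_natCast ((n:ℝ) ^ (((2:ℝ)^L-1)/2)) 2, ← Real.rpow_mul hn0, h2c,
      div_mul_cancel₀ _ (by norm_num : (2:ℝ) ≠ 0),
      show (2:ℝ)^L-1 = ((2^L-1 : ℕ):ℝ) by
        push_cast [Nat.one_le_two_pow]; ring,
      Real.rpow_natCast]
  have hQsq : (2 ^ (2 ^ L + L - 3) * (d : ℝ) ^ (((2 : ℝ) ^ (L - 1) - 1) / 2) *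
        C ^ (2 ^ L - 1) * (n : ℝ) ^ (((2 : ℝ) ^ L - 1) / 2))^2
      = 2^(2*(2^L+L-3)) * (d:ℝ)^((2^(L-1)-1 : ℕ)) * C^(2*(2^L-1)) * (n:ℝ)^((2^L-1 : ℕ)) := by
    rw [mul_pow, mul_pow, mul_pow, hdr, hnr, ← pow_mul, ← pow_mul]
    ring
  rw [hQsq]
  -- exponent facts
  have p2 : 1 ≤ 2^L' := Nat.one_le_two_pow
  have p1 : 2*2^L' ≤ 2^L := by
    calc 2*2^L' = 2^(L'+1) := by ring
      _ ≤ 2^L := Nat.pow_le_pow_right (by norm_num) hL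
  have p3 : 2^L' ≤ 2^(L-1) := Nat.pow_le_pow_right (by norm_num) (by omega)
  have p4 : 1 ≤ 2^(L-1) := Nat.one_le_two_pow
  have p5 : 1 ≤ 2^L := Nat.one_le_two_pow
  calc C^2 * (n:ℝ) * Tb C n d L'
      ≤ C^2 * (n:ℝ) * (2^L' * (2*C^2*(n:ℝ))^(2*2^L'-2) * (d:ℝ)^(2^L'-1)) := by
        have h := Tb_le hC hn hd L'
        have : (0:ℝ) ≤ C^2 * (n:ℝ) := by positivity
        exact mul_le_mul_of_nonneg_left h this
    _ = 2^(L' + (2*2^L'-2)) * (d:ℝ)^(2^L'-1) * C^(2*(2*2^L'-2)+2) * (n:ℝ)^((2*2^L'-2)+1) := by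
        ring
    _ ≤ 2^(2*(2^L+L-3)) * (d:ℝ)^((2^(L-1)-1 : ℕ)) * C^(2*(2^L-1)) * (n:ℝ)^((2^L-1 : ℕ)) := by
        gcongr <;> first
          | assumption
          | omega
          | norm_num

lemma hidden_congr (Nd : ℕ → ℕ)
    (A : (ℓ : ℕ) → Matrix (Fin (Nd (ℓ + 1))) (Fin (Nd ℓ)) ℝ)
    (b : (ℓ : ℕ) → Fin (Nd (ℓ + 1)) → ℝ) (x y : Fin (Nd 0) → ℝ)
    (k : ℕ) (he : hiddenLayers Nd A b k x = hiddenLayers Nd A b k y) :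
    ∀ m, k ≤ m → hiddenLayers Nd A b m x = hiddenLayers Nd A b m y := by
  intro m
  induction m with
  | zero => intro h; have : k = 0 := Nat.le_zero.mp h; rw [← this]; exact he
  | succ m ih =>
    intro h
    rcases Nat.eq_or_lt_of_le h with h1 | h1
    · rw [← h1]; exact he
    · have := ih (by omega)
      simp only [hiddenLayers, this]

lemma realize_congr_zero (Nd : ℕ → ℕ)
    (A : (ℓ : ℕ) → Matrix (Fin (Nd (ℓ + 1))) (Fin (Nd ℓ)) ℝ)
    (b : (ℓ : ℕ) → Fin (Nd (ℓ + 1)) → ℝ) (x y : Fin (Nd 0) → ℝ)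
    (L' ℓ : ℕ) (hℓ : ℓ ≤ L')
    (hA : ∀ i j, A ℓ i j = 0) (hb : ∀ i, b ℓ i = 0) :
    realize Nd A b L' x = realize Nd A b L' y := by
  have hmv : ∀ (v : Fin (Nd ℓ) → ℝ) (i : Fin (Nd (ℓ+1))), (A ℓ).mulVec v i = 0 := by
    intro v i
    simp [Matrix.mulVec, dotProduct, hA]
  rcases Nat.eq_or_lt_of_le hℓ with h1 | h1
  · subst h1
    funext i
    simp only [realize, hmv, hb]
  · have hstep : hiddenLayers Nd A b (ℓ+1) x = hiddenLayers Nd A b (ℓ+1) y := by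
      funext i
      simp only [hiddenLayers, hmv, hb]
    have := hidden_congr Nd A b x y (ℓ+1) hstep L' h1
    funext i
    simp only [realize, this]

set_option maxHeartbeats 1000000 in
open Classical in
lemma hidden_bounds (Nd : ℕ → ℕ)
    (A : (ℓ : ℕ) → Matrix (Fin (Nd (ℓ + 1))) (Fin (Nd ℓ)) ℝ)
    (b : (ℓ : ℕ) → Fin (Nd (ℓ + 1)) → ℝ)
    (C : ℝ) (hC : 1 ≤ C) (n : ℕ) (hn1 : 1 ≤ n) (hd1 : 1 ≤ Nd 0)
    (L' : ℕ)
    (hw : ∀ ℓ ≤ L', (∀ i j, |A ℓ i j| ≤ C) ∧ (∀ i, |b ℓ i| ≤ C))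
    (hcard : ∀ ℓ ≤ L',
      ((Finset.univ.filter (fun p : Fin (Nd (ℓ+1)) × Fin (Nd ℓ) => A ℓ p.1 p.2 ≠ 0)).card
        + (Finset.univ.filter (fun i : Fin (Nd (ℓ+1)) => b ℓ i ≠ 0)).card) ≤ n)
    (x y : Fin (Nd 0) → ℝ) (hx : x ∈ Set.Icc 0 1) (hy : y ∈ Set.Icc 0 1) :
    ∀ k, k ≤ L' →
      (∑ i, (hiddenLayers Nd A b k x i)^2 ≤ Sb C n (Nd 0) k) ∧
      (∑ i, (hiddenLayers Nd A b k y i)^2 ≤ Sb C n (Nd 0) k) ∧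
      (∑ i, (hiddenLayers Nd A b k x i - hiddenLayers Nd A b k y i)^2 ≤
        Tb C n (Nd 0) k * (∑ j, |x j - y j|)^2) := by
  have hD0 : (0:ℝ) ≤ ∑ j, |x j - y j| := Finset.sum_nonneg fun j _ => abs_nonneg _
  intro k
  induction k with
  | zero =>
    intro _
    obtain ⟨hx0, hx1⟩ := hx
    obtain ⟨hy0, hy1⟩ := hy
    refine ⟨?_, ?_, ?_⟩
    · simp only [hiddenLayers, Sb]
      calc ∑ i, (x i)^2 ≤ ∑ _i : Fin (Nd 0), (1:ℝ) := by
            refine Finset.sum_le_sum fun i _ => ?_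
            have h0 := hx0 i; have h1 := hx1 i
            simp only [Pi.zero_apply, Pi.one_apply] at h0 h1
            nlinarith
        _ = (Nd 0 : ℝ) := by rw [Finset.sum_const, Finset.card_univ, Fintype.card_fin, nsmul_eq_mul, mul_one]
    · simp only [hiddenLayers, Sb]
      calc ∑ i, (y i)^2 ≤ ∑ _i : Fin (Nd 0), (1:ℝ) := by
            refine Finset.sum_le_sum fun i _ => ?_
            have h0 := hy0 i; have h1 := hy1 i
            simp only [Pi.zero_apply, Pi.one_apply] at h0 h1
            nlinarith
        _ = (Nd 0 : ℝ) := by rw [Finset.sum_const, Finset.card_univ, Fintype.card_fin, nsmul_eq_mul, mul_one]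
    · simp only [hiddenLayers, Tb, one_mul]
      calc ∑ i, (x i - y i)^2 = ∑ i, |x i - y i|^2 := by
            exact Finset.sum_congr rfl fun i _ => (sq_abs _).symm
        _ ≤ (∑ j, |x j - y j|)^2 :=
            Finset.sum_sq_le_sq_sum_of_nonneg fun i _ => abs_nonneg _
  | succ k ih =>
    intro hkL
    have hkL' : k ≤ L' := le_trans (Nat.le_succ k) hkL
    obtain ⟨ihx, ihy, ihd⟩ := ih hkL'
    obtain ⟨hwA, hwb⟩ := hw k hkL'
    have hcardk := hcard k hkL'
    set hx' := hiddenLayers Nd A b k x with hhx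
    set hy' := hiddenLayers Nd A b k y with hhy
    set S := Sb C n (Nd 0) k with hS
    set D := ∑ j, |x j - y j| with hD
    have hS1 : (1:ℝ) ≤ S := one_le_Sb hC hn1 hd1 k
    have hT1 : (1:ℝ) ≤ Tb C n (Nd 0) k := one_le_Tb hC hn1 hd1 k
    set cA := ((Finset.univ.filter
      (fun p : Fin (Nd (k+1)) × Fin (Nd k) => A k p.1 p.2 ≠ 0)).card : ℝ) with hcA
    set cb := ((Finset.univ.filter (fun i : Fin (Nd (k+1)) => b k i ≠ 0)).card : ℝ) with hcb
    have hcAn : cA + cb ≤ (n:ℝ) := by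
      rw [hcA, hcb]; push_cast; exact_mod_cast Nat.cast_le.mpr hcardk
    have hcA0 : 0 ≤ cA := Nat.cast_nonneg _
    have hcb0 : 0 ≤ cb := Nat.cast_nonneg _
    have hC0 : (0:ℝ) < C := lt_of_lt_of_le one_pos hC
    have hn0 : (0:ℝ) ≤ (n:ℝ) := Nat.cast_nonneg _
    -- bound on sum of squares of b
    have hbsq : ∑ i, (b k i)^2 ≤ C^2 * cb := by
      calc ∑ i, (b k i)^2
          = ∑ i ∈ Finset.univ.filter (fun i : Fin (Nd (k+1)) => b k i ≠ 0), (b k i)^2 := by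
            rw [Finset.sum_filter_of_ne]
            intro i _ h hbi
            exact h (by simp [hbi])
        _ ≤ ∑ _i ∈ Finset.univ.filter (fun i : Fin (Nd (k+1)) => b k i ≠ 0), C^2 := by
            refine Finset.sum_le_sum fun i _ => ?_
            have := hwb i
            nlinarith [abs_nonneg (b k i), sq_abs (b k i)]
        _ = C^2 * cb := by rw [Finset.sum_const, nsmul_eq_mul, mul_comm, hcb]
    -- pre-activation sum bounds
    have hzsum : ∀ (v : Fin (Nd 0) → ℝ),
        (∑ i, (hiddenLayers Nd A b k v i)^2 ≤ S) →
        ∑ i, ((A k).mulVec (hiddenLayers Nd A b k v) i + b k i)^2 ≤ 2*C^2*(n:ℝ)*S := by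
      intro v hv
      have h1 : ∑ i, ((A k).mulVec (hiddenLayers Nd A b k v) i)^2 ≤ C^2 * cA * S := by
        calc ∑ i, ((A k).mulVec (hiddenLayers Nd A b k v) i)^2
            ≤ C^2 * cA * ∑ j, (hiddenLayers Nd A b k v j)^2 :=
              mulVec_sq_sum_le (A k) C hwA _
          _ ≤ C^2 * cA * S := mul_le_mul_of_nonneg_left hv (by positivity)
      calc ∑ i, ((A k).mulVec (hiddenLayers Nd A b k v) i + b k i)^2
          ≤ ∑ i, (2 * ((A k).mulVec (hiddenLayers Nd A b k v) i)^2 + 2 * (b k i)^2) := by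
            refine Finset.sum_le_sum fun i _ => ?_
            nlinarith [sq_nonneg ((A k).mulVec (hiddenLayers Nd A b k v) i - b k i)]
        _ = 2 * (∑ i, ((A k).mulVec (hiddenLayers Nd A b k v) i)^2) + 2 * ∑ i, (b k i)^2 := by
            rw [Finset.sum_add_distrib, Finset.mul_sum, Finset.mul_sum]
        _ ≤ 2 * (C^2 * cA * S) + 2 * (C^2 * cb) := by
            have := hbsq
            gcongr
        _ ≤ 2*C^2*(n:ℝ)*S := by
            have hS0 : (0:ℝ) ≤ S := by linarith
            have e1 : cb ≤ cb * S := le_mul_of_one_le_right hcb0 hS1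
            have e2 : (cA + cb) * S ≤ (n:ℝ) * S := mul_le_mul_of_nonneg_right hcAn hS0
            rw [add_mul] at e2
            have e3 : cA * S + cb ≤ (n:ℝ) * S := by linarith
            have e4 : C^2 * (cA * S + cb) ≤ C^2 * ((n:ℝ) * S) :=
              mul_le_mul_of_nonneg_left e3 (by positivity)
            nlinarith [e4]
    have hzx := hzsum x ihx
    have hzy := hzsum y ihy
    refine ⟨?_, ?_, ?_⟩
    · -- sum of squares bound for x at k+1
      simp only [hiddenLayers, Sb, ← hhx, ← hS]
      calc ∑ i, (requ ((A k).mulVec hx' i + b k i))^2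
          ≤ (∑ i, ((A k).mulVec hx' i + b k i)^2)^2 := by
            calc ∑ i, (requ ((A k).mulVec hx' i + b k i))^2
                = ∑ i, ((max 0 ((A k).mulVec hx' i + b k i))^2)^2 := by
                  simp only [requ_eq]
              _ ≤ (∑ i, (max 0 ((A k).mulVec hx' i + b k i))^2)^2 :=
                  Finset.sum_sq_le_sq_sum_of_nonneg fun i _ => sq_nonneg _
              _ ≤ (∑ i, ((A k).mulVec hx' i + b k i)^2)^2 := by
                  apply pow_le_pow_left₀ (Finset.sum_nonneg fun i _ => sq_nonneg _)
                  exact Finset.sum_le_sum fun i _ => sq_max_le _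
        _ ≤ (2*C^2*(n:ℝ)*S)^2 := by
            refine pow_le_pow_left₀ ?_ hzx 2
            exact Finset.sum_nonneg fun i _ => sq_nonneg _
    · simp only [hiddenLayers, Sb, ← hhy, ← hS]
      calc ∑ i, (requ ((A k).mulVec hy' i + b k i))^2
          ≤ (∑ i, ((A k).mulVec hy' i + b k i)^2)^2 := by
            calc ∑ i, (requ ((A k).mulVec hy' i + b k i))^2
                = ∑ i, ((max 0 ((A k).mulVec hy' i + b k i))^2)^2 := by
                  simp only [requ_eq]
              _ ≤ (∑ i, (max 0 ((A k).mulVec hy' i + b k i))^2)^2 :=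
                  Finset.sum_sq_le_sq_sum_of_nonneg fun i _ => sq_nonneg _
              _ ≤ (∑ i, ((A k).mulVec hy' i + b k i)^2)^2 := by
                  apply pow_le_pow_left₀ (Finset.sum_nonneg fun i _ => sq_nonneg _)
                  exact Finset.sum_le_sum fun i _ => sq_max_le _
        _ ≤ (2*C^2*(n:ℝ)*S)^2 := by
            refine pow_le_pow_left₀ ?_ hzy 2
            exact Finset.sum_nonneg fun i _ => sq_nonneg _
    · -- Lipschitz bound at k+1
      simp only [hiddenLayers, Tb, ← hhx, ← hhy, ← hS, ← hD]
      have hMz : ∀ i : Fin (Nd (k+1)),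
          (max 0 ((A k).mulVec hx' i + b k i) + max 0 ((A k).mulVec hy' i + b k i))^2
            ≤ 8*C^2*(n:ℝ)*S := by
        intro i
        have h1 : ((A k).mulVec hx' i + b k i)^2 ≤ 2*C^2*(n:ℝ)*S := by
          refine le_trans ?_ hzx
          exact Finset.single_le_sum (f := fun j => ((A k).mulVec hx' j + b k j)^2)
            (fun j _ => sq_nonneg _) (Finset.mem_univ i)
        have h2 : ((A k).mulVec hy' i + b k i)^2 ≤ 2*C^2*(n:ℝ)*S := by
          refine le_trans ?_ hzy
          exact Finset.single_le_sum (f := fun j => ((A k).mulVec hy' j + b k j)^2)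
            (fun j _ => sq_nonneg _) (Finset.mem_univ i)
        have m1 := sq_max_le ((A k).mulVec hx' i + b k i)
        have m2 := sq_max_le ((A k).mulVec hy' i + b k i)
        have m1' := le_max_left (0:ℝ) ((A k).mulVec hx' i + b k i)
        have m2' := le_max_left (0:ℝ) ((A k).mulVec hy' i + b k i)
        nlinarith [sq_nonneg (max 0 ((A k).mulVec hx' i + b k i) - max 0 ((A k).mulVec hy' i + b k i))]
      have hdz : ∑ i, ((A k).mulVec (hx' - hy') i)^2 ≤ C^2 * (n:ℝ) * (Tb C n (Nd 0) k * D^2) := by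
        calc ∑ i, ((A k).mulVec (hx' - hy') i)^2
            ≤ C^2 * cA * ∑ j, (hx' - hy') j ^ 2 := mulVec_sq_sum_le (A k) C hwA _
          _ = C^2 * cA * ∑ j, (hx' j - hy' j) ^ 2 := by
              congr 1
          _ ≤ C^2 * (n:ℝ) * (Tb C n (Nd 0) k * D^2) := by
              have hsum : ∑ j, (hx' j - hy' j) ^ 2 ≤ Tb C n (Nd 0) k * D^2 := ihd
              have h2 : cA ≤ (n:ℝ) := by linarith
              have h3 : (0:ℝ) ≤ ∑ j, (hx' j - hy' j) ^ 2 :=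
                Finset.sum_nonneg fun j _ => sq_nonneg _
              calc C^2 * cA * ∑ j, (hx' j - hy' j) ^ 2
                  ≤ C^2 * (n:ℝ) * ∑ j, (hx' j - hy' j) ^ 2 := by
                    apply mul_le_mul_of_nonneg_right _ h3
                    apply mul_le_mul_of_nonneg_left h2 (by positivity)
                _ ≤ C^2 * (n:ℝ) * (Tb C n (Nd 0) k * D^2) := by
                    apply mul_le_mul_of_nonneg_left hsum (by positivity)
      calc ∑ i, (requ ((A k).mulVec hx' i + b k i) - requ ((A k).mulVec hy' i + b k i))^2
          ≤ ∑ i, (8*C^2*(n:ℝ)*S) * ((A k).mulVec (hx' - hy') i)^2 := by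
            refine Finset.sum_le_sum fun i _ => ?_
            have habs := abs_requ_sub_le ((A k).mulVec hx' i + b k i) ((A k).mulVec hy' i + b k i)
            have hdzi : (A k).mulVec (hx' - hy') i
                = ((A k).mulVec hx' i + b k i) - ((A k).mulVec hy' i + b k i) := by
              rw [Matrix.mulVec_sub]; simp
            have h1 : (requ ((A k).mulVec hx' i + b k i) - requ ((A k).mulVec hy' i + b k i))^2
                ≤ ((max 0 ((A k).mulVec hx' i + b k i) + max 0 ((A k).mulVec hy' i + b k i))
                    * |(A k).mulVec hx' i + b k i - ((A k).mulVec hy' i + b k i)|)^2 := by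
              rw [← sq_abs]
              apply pow_le_pow_left₀ (abs_nonneg _) habs
            rw [hdzi]
            refine le_trans h1 ?_
            rw [mul_pow, sq_abs]
            apply mul_le_mul_of_nonneg_right (hMz i) (sq_nonneg _)
        _ = (8*C^2*(n:ℝ)*S) * ∑ i, ((A k).mulVec (hx' - hy') i)^2 := by
            rw [Finset.mul_sum]
        _ ≤ (8*C^2*(n:ℝ)*S) * (C^2 * (n:ℝ) * (Tb C n (Nd 0) k * D^2)) := by
            apply mul_le_mul_of_nonneg_left hdz (by positivity)
        _ = 8 * C^4 * (n:ℝ)^2 * S * Tb C n (Nd 0) k * D^2 := by ring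

open Classical in
theorem stmt15 (d n L : ℕ) (C : ℝ) (hC : 1 ≤ C)
    (Nd : ℕ → ℕ) (A : (ℓ : ℕ) → Matrix (Fin (Nd (ℓ + 1))) (Fin (Nd ℓ)) ℝ)
    (b : (ℓ : ℕ) → Fin (Nd (ℓ + 1)) → ℝ)
    (L' : ℕ) (hL : L' + 1 ≤ L)
    (hN0 : Nd 0 = d) (hNL : Nd (L' + 1) = 1)
    (hw : ∀ ℓ ≤ L', (∀ i j, |A ℓ i j| ≤ C) ∧ (∀ i, |b ℓ i| ≤ C))
    (hn : ∑ ℓ ∈ Finset.range (L' + 1),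
        ((Finset.univ.filter
            (fun p : Fin (Nd (ℓ + 1)) × Fin (Nd ℓ) => A ℓ p.1 p.2 ≠ 0)).card
          + (Finset.univ.filter (fun i : Fin (Nd (ℓ + 1)) => b ℓ i ≠ 0)).card) ≤ n) :
    ∀ x y : Fin (Nd 0) → ℝ, x ∈ Set.Icc 0 1 → y ∈ Set.Icc 0 1 →
      ∀ i : Fin (Nd (L' + 1)),
      (|realize Nd A b L' x i - realize Nd A b L' y i| ≤
        2 ^ (2 ^ L + L - 3) * (d : ℝ) ^ (((2 : ℝ) ^ (L - 1) - 1) / 2) *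
          C ^ (2 ^ L - 1) * (n : ℝ) ^ (((2 : ℝ) ^ L - 1) / 2) *
          (∑ j, |x j - y j|)) ∧
      (|realize Nd A b L' x i - realize Nd A b L' y i| ≤
        (d : ℝ) * (2 ^ (2 ^ L + L - 3) * (d : ℝ) ^ (((2 : ℝ) ^ (L - 1) - 1) / 2) *
          C ^ (2 ^ L - 1) * (n : ℝ) ^ (((2 : ℝ) ^ L - 1) / 2)) *
          (⨆ j, |x j - y j|)) := by
  subst hN0
  intro x y hx hy i
  set Q : ℝ := 2 ^ (2 ^ L + L - 3) * ((Nd 0 : ℕ) : ℝ) ^ (((2 : ℝ) ^ (L - 1) - 1) / 2) *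
      C ^ (2 ^ L - 1) * (n : ℝ) ^ (((2 : ℝ) ^ L - 1) / 2) with hQdef
  have hQ0 : (0:ℝ) ≤ Q := by rw [hQdef]; positivity
  have hD0 : (0:ℝ) ≤ ∑ j, |x j - y j| := Finset.sum_nonneg fun j _ => abs_nonneg _
  have hsup0 : (0:ℝ) ≤ ⨆ j, |x j - y j| := Real.iSup_nonneg fun j => abs_nonneg _
  have hDsup : ∑ j, |x j - y j| ≤ ((Nd 0 : ℕ) : ℝ) * ⨆ j, |x j - y j| := by
    rcases Nat.eq_zero_or_pos (Nd 0) with h0 | h0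
    · have he : (Finset.univ : Finset (Fin (Nd 0))) = ∅ :=
        Finset.card_eq_zero.mp (by simp [h0])
      rw [he, Finset.sum_empty]
      exact mul_nonneg (Nat.cast_nonneg _) hsup0
    · calc ∑ j, |x j - y j| ≤ ∑ _j : Fin (Nd 0), ⨆ j, |x j - y j| :=
          Finset.sum_le_sum fun j _ =>
            le_ciSup (f := fun j => |x j - y j|)
              (Set.Finite.bddAbove (Set.finite_range _)) j
        _ = ((Nd 0 : ℕ) : ℝ) * ⨆ j, |x j - y j| := by
            rw [Finset.sum_const, Finset.card_univ, Fintype.card_fin, nsmul_eq_mul]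
  suffices h : |realize Nd A b L' x i - realize Nd A b L' y i| ≤ Q * ∑ j, |x j - y j| by
    refine ⟨h, ?_⟩
    calc |realize Nd A b L' x i - realize Nd A b L' y i|
        ≤ Q * ∑ j, |x j - y j| := h
      _ ≤ Q * (((Nd 0 : ℕ) : ℝ) * ⨆ j, |x j - y j|) := mul_le_mul_of_nonneg_left hDsup hQ0
      _ = ((Nd 0 : ℕ) : ℝ) * Q * (⨆ j, |x j - y j|) := by ring
  rcases Nat.eq_zero_or_pos (Nd 0) with hd0 | hd0
  · have hxy : x = y := funext fun j => absurd j.isLt (by omega)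
    rw [hxy, sub_self, abs_zero]
    exact mul_nonneg hQ0 (Finset.sum_nonneg fun j _ => abs_nonneg _)
  by_cases hz : ∀ ℓ, ℓ ≤ L' → 1 ≤
      ((Finset.univ.filter
          (fun p : Fin (Nd (ℓ + 1)) × Fin (Nd ℓ) => A ℓ p.1 p.2 ≠ 0)).card
        + (Finset.univ.filter (fun i : Fin (Nd (ℓ + 1)) => b ℓ i ≠ 0)).card)
  · -- main case
    have hcard : ∀ ℓ, ℓ ≤ L' →
        ((Finset.univ.filter
            (fun p : Fin (Nd (ℓ + 1)) × Fin (Nd ℓ) => A ℓ p.1 p.2 ≠ 0)).card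
          + (Finset.univ.filter (fun i : Fin (Nd (ℓ + 1)) => b ℓ i ≠ 0)).card) ≤ n := by
      intro ℓ hℓ
      refine le_trans ?_ hn
      exact Finset.single_le_sum (f := fun ℓ =>
        ((Finset.univ.filter
            (fun p : Fin (Nd (ℓ + 1)) × Fin (Nd ℓ) => A ℓ p.1 p.2 ≠ 0)).card
          + (Finset.univ.filter (fun i : Fin (Nd (ℓ + 1)) => b ℓ i ≠ 0)).card))
        (fun _ _ => Nat.zero_le _) (Finset.mem_range.mpr (by omega))
    have hn1 : 1 ≤ n := le_trans (hz 0 (Nat.zero_le _)) (hcard 0 (Nat.zero_le _))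
    obtain ⟨hxS, hyS, hdT⟩ :=
      hidden_bounds Nd A b C hC n hn1 hd0 L' hw hcard x y hx hy L' le_rfl
    have hdiff : realize Nd A b L' x i - realize Nd A b L' y i =
        (A L').mulVec (hiddenLayers Nd A b L' x - hiddenLayers Nd A b L' y) i := by
      simp only [realize, Matrix.mulVec_sub, Pi.sub_apply]
      ring
    have hkey : (realize Nd A b L' x i - realize Nd A b L' y i)^2 ≤
        C^2 * (n:ℝ) * Tb C n (Nd 0) L' * (∑ j, |x j - y j|)^2 := by
      rw [hdiff]
      calc ((A L').mulVec (hiddenLayers Nd A b L' x - hiddenLayers Nd A b L' y) i)^2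
          ≤ ∑ i', ((A L').mulVec (hiddenLayers Nd A b L' x - hiddenLayers Nd A b L' y) i')^2 :=
            Finset.single_le_sum (f := fun i' =>
              ((A L').mulVec (hiddenLayers Nd A b L' x - hiddenLayers Nd A b L' y) i')^2)
              (fun _ _ => sq_nonneg _) (Finset.mem_univ i)
        _ ≤ C^2 * ((Finset.univ.filter
              (fun p : Fin (Nd (L' + 1)) × Fin (Nd L') => A L' p.1 p.2 ≠ 0)).card : ℝ)
              * ∑ j, (hiddenLayers Nd A b L' x - hiddenLayers Nd A b L' y) j ^ 2 :=
            mulVec_sq_sum_le (A L') C (hw L' le_rfl).1 _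
        _ = C^2 * ((Finset.univ.filter
              (fun p : Fin (Nd (L' + 1)) × Fin (Nd L') => A L' p.1 p.2 ≠ 0)).card : ℝ)
              * ∑ j, (hiddenLayers Nd A b L' x j - hiddenLayers Nd A b L' y j) ^ 2 := by
            simp only [Pi.sub_apply]
        _ ≤ C^2 * (n:ℝ) * (Tb C n (Nd 0) L' * (∑ j, |x j - y j|)^2) := by
            have hc1 : ((Finset.univ.filter
                (fun p : Fin (Nd (L' + 1)) × Fin (Nd L') => A L' p.1 p.2 ≠ 0)).card : ℝ)
                ≤ (n:ℝ) := by
              have h4 := hcard L' le_rfl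
              exact_mod_cast le_trans (Nat.le_add_right _ _) h4
            have h3 : (0:ℝ) ≤ ∑ j, (hiddenLayers Nd A b L' x j - hiddenLayers Nd A b L' y j)^2 :=
              Finset.sum_nonneg fun j _ => sq_nonneg _
            calc C^2 * ((Finset.univ.filter
                  (fun p : Fin (Nd (L' + 1)) × Fin (Nd L') => A L' p.1 p.2 ≠ 0)).card : ℝ)
                  * ∑ j, (hiddenLayers Nd A b L' x j - hiddenLayers Nd A b L' y j) ^ 2
                ≤ C^2 * (n:ℝ)
                  * ∑ j, (hiddenLayers Nd A b L' x j - hiddenLayers Nd A b L' y j) ^ 2 := by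
                  apply mul_le_mul_of_nonneg_right _ h3
                  exact mul_le_mul_of_nonneg_left hc1 (by positivity)
              _ ≤ C^2 * (n:ℝ) * (Tb C n (Nd 0) L' * (∑ j, |x j - y j|)^2) :=
                  mul_le_mul_of_nonneg_left hdT (by positivity)
        _ = C^2 * (n:ℝ) * Tb C n (Nd 0) L' * (∑ j, |x j - y j|)^2 := by ring
    have h2 : (realize Nd A b L' x i - realize Nd A b L' y i)^2 ≤ (Q * ∑ j, |x j - y j|)^2 := by
      calc (realize Nd A b L' x i - realize Nd A b L' y i)^2
          ≤ C^2 * (n:ℝ) * Tb C n (Nd 0) L' * (∑ j, |x j - y j|)^2 := hkey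
        _ ≤ Q^2 * (∑ j, |x j - y j|)^2 := by
            apply mul_le_mul_of_nonneg_right _ (sq_nonneg _)
            rw [hQdef]
            exact final_numeric hC hn1 hd0 hL
        _ = (Q * ∑ j, |x j - y j|)^2 := (mul_pow _ _ _).symm
    calc |realize Nd A b L' x i - realize Nd A b L' y i|
        = Real.sqrt ((realize Nd A b L' x i - realize Nd A b L' y i)^2) :=
          (Real.sqrt_sq_eq_abs _).symm
      _ ≤ Real.sqrt ((Q * ∑ j, |x j - y j|)^2) := Real.sqrt_le_sqrt h2
      _ = Q * ∑ j, |x j - y j| := Real.sqrt_sq (mul_nonneg hQ0 hD0)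
  · -- degenerate case : some layer is entirely zero
    push_neg at hz
    obtain ⟨ℓ, hℓ, hlt⟩ := hz
    have hAe : (Finset.univ.filter
        (fun p : Fin (Nd (ℓ + 1)) × Fin (Nd ℓ) => A ℓ p.1 p.2 ≠ 0)) = ∅ :=
      Finset.card_eq_zero.mp (by omega)
    have hbe : (Finset.univ.filter (fun i : Fin (Nd (ℓ + 1)) => b ℓ i ≠ 0)) = ∅ :=
      Finset.card_eq_zero.mp (by omega)
    have hA0 : ∀ i' j, A ℓ i' j = 0 := by
      intro i' j
      by_contra hne
      have hmem : ((i', j) : Fin (Nd (ℓ + 1)) × Fin (Nd ℓ)) ∈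
          (Finset.univ.filter
            (fun p : Fin (Nd (ℓ + 1)) × Fin (Nd ℓ) => A ℓ p.1 p.2 ≠ 0)) :=
        Finset.mem_filter.mpr ⟨Finset.mem_univ _, hne⟩
      rw [hAe] at hmem
      exact absurd hmem (Finset.notMem_empty _)
    have hb0 : ∀ i', b ℓ i' = 0 := by
      intro i'
      by_contra hne
      have hmem : i' ∈ (Finset.univ.filter (fun i : Fin (Nd (ℓ + 1)) => b ℓ i ≠ 0)) :=
        Finset.mem_filter.mpr ⟨Finset.mem_univ _, hne⟩
      rw [hbe] at hmem
      exact absurd hmem (Finset.notMem_empty _)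
    rw [realize_congr_zero Nd A b x y L' ℓ hℓ hA0 hb0, sub_self, abs_zero]
    exact mul_nonneg hQ0 hD0
end
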